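/- For the multi-channel strided convolution with stride S ≥ 1 and kernel size Size = (Size_1,…,Size_d), letting D = Π_i ⌈Size_i / S⌉, the strided output satisfies ‖w∗_S x‖₂ ≤ √(D · ‖w‖₁ · ‖w‖_∞) · ‖x‖₂, where ‖w‖_∞ = max_{j,i,u} |w(j,i,u)|. -/

import Mathlib

open Pointwise

private lemma strided_mem_Icc {S : ℤ} (hS : 0 < S) {a n t : ℤ}
    (h1 : a ≤ S * t) (h2 : S * t < a + n) :
    t ∈ Finset.Icc (-(-a / S)) ((a + n - 1) / S) := by
  rw [Finset.mem_Icc]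
  constructor
  · rw [neg_le, Int.le_ediv_iff_mul_le hS]; nlinarith
  · rw [Int.le_ediv_iff_mul_le hS]; nlinarith

private lemma strided_card_Icc {S : ℕ} (hS : 1 ≤ S) {n : ℕ} (hn : 1 ≤ n) (a : ℤ) :
    (Finset.Icc (-(-a / (S : ℤ))) ((a + n - 1) / (S : ℤ))).card ≤ (n + S - 1) / S := by
  have hS0 : (0:ℤ) < S := by exact_mod_cast hS
  have hSne : (S:ℤ) ≠ 0 := hS0.ne'
  rw [Int.card_Icc, Int.toNat_le]
  have hcast : (((n + S - 1) / S : ℕ) : ℤ) = ((n:ℤ) + S - 1) / (S:ℤ) := by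
    rw [Int.natCast_ediv]
    congr 1
    push_cast [Nat.cast_sub (by omega : 1 ≤ n + S)]
    ring
  rw [hcast]
  have key : (a + n - 1) / (S:ℤ) + (-a) / (S:ℤ) ≤ ((n:ℤ) - 1) / (S:ℤ) := by
    rw [Int.le_ediv_iff_mul_le hS0, add_mul]
    have h1 := Int.ediv_mul_le (a + n - 1) hSne
    have h2 := Int.ediv_mul_le (-a) hSne
    linarith
  have key2 : ((n:ℤ) - 1) / (S:ℤ) + 1 = ((n:ℤ) + S - 1) / (S:ℤ) := by
    have := Int.add_mul_ediv_right ((n:ℤ) - 1) 1 hSne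
    rw [one_mul] at this
    rw [← this]; ring_nf
  linarith

theorem strided_multichannel_conv_bound
    (d : ℕ) (Cout Cin : Type*) [Fintype Cout] [Fintype Cin]
    [Nonempty Cout] [Nonempty Cin]
    (S : ℕ) (hS : 1 ≤ S) (Size : Fin d → ℕ)
    (w : Cout → Cin → (Fin d → ℤ) → ℝ) (x : (Fin d → ℤ) → Cin → ℝ)
    (hbox : ∀ j i (u : Fin d → ℤ), w j i u ≠ 0 → ∀ k, 0 ≤ u k ∧ u k < (Size k : ℤ))
    (hx : ∀ i, (Function.support fun v => x v i).Finite) :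
    Real.sqrt (∑' t : Fin d → ℤ, ∑ j : Cout,
        (∑ᶠ v : Fin d → ℤ, ∑ i : Cin,
          x v i * w j i ((fun k => (S : ℤ) * t k) - v)) ^ 2)
      ≤ Real.sqrt (((∏ k : Fin d, ((Size k + S - 1) / S) : ℕ) : ℝ) *
          (∑ j : Cout, ∑ i : Cin, ∑' u : Fin d → ℤ, |w j i u|) *
          (⨆ j : Cout, ⨆ i : Cin, ⨆ u : Fin d → ℤ, |w j i u|)) *
        Real.sqrt (∑' v : Fin d → ℤ, ∑ i : Cin, (x v i) ^ 2) := by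
  classical
  haveI : DecidableEq (Fin d → ℤ) := Classical.decEq _
  by_cases hz : ∀ k, 1 ≤ Size k
  swap
  · push_neg at hz
    obtain ⟨k, hk⟩ := hz
    have hw0 : ∀ j i u, w j i u = 0 := by
      intro j i u
      by_contra h
      have h1 := (hbox j i u h k).1
      have h2 := (hbox j i u h k).2
      omega
    simp only [hw0, mul_zero, Finset.sum_const_zero, finsum_zero, ne_eq,
      OfNat.ofNat_ne_zero, not_false_eq_true, zero_pow, tsum_zero, Real.sqrt_zero]
    positivity
  -- main case
  have hS0 : (0:ℤ) < S := by exact_mod_cast hS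
  have hSne : (S:ℤ) ≠ 0 := hS0.ne'
  -- finite boxes
  set B : Finset (Fin d → ℤ) := Fintype.piFinset fun k => Finset.Ico (0:ℤ) (Size k) with hB
  have hwB : ∀ j i u, w j i u ≠ 0 → u ∈ B := by
    intro j i u h
    rw [hB, Fintype.mem_piFinset]
    intro k
    rw [Finset.mem_Ico]
    exact hbox j i u h k
  have hXfin : (⋃ i : Cin, Function.support fun v => x v i).Finite := Set.finite_iUnion hx
  set X : Finset (Fin d → ℤ) := hXfin.toFinset with hXdef
  have hxX : ∀ v i, x v i ≠ 0 → v ∈ X := by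
    intro v i h
    rw [hXdef, Set.Finite.mem_toFinset]
    exact Set.mem_iUnion.2 ⟨i, h⟩
  -- sigma map
  have hσinj : Function.Injective (fun t : Fin d → ℤ => fun k => (S:ℤ) * t k) := by
    intro t t' h
    funext k
    have := congrFun h k
    exact mul_left_cancel₀ hSne this
  set T : Finset (Fin d → ℤ) :=
    Finset.preimage (X + B) (fun t : Fin d → ℤ => fun k => (S:ℤ) * t k)
      (hσinj.injOn) with hTdef
  -- sup norm bounds
  set M : ℝ := ⨆ j : Cout, ⨆ i : Cin, ⨆ u : Fin d → ℤ, |w j i u| with hMdef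
  set W1 : ℝ := ∑ j : Cout, ∑ i : Cin, ∑ u ∈ B, |w j i u| with hW1def
  have hW1nonneg : 0 ≤ W1 := by
    rw [hW1def]; positivity
  have habs_le_W1 : ∀ j i u, |w j i u| ≤ W1 := by
    intro j i u
    have h1 : |w j i u| ≤ ∑ u' ∈ B, |w j i u'| := by
      by_cases hw : w j i u = 0
      · rw [hw, abs_zero]
        exact Finset.sum_nonneg fun _ _ => abs_nonneg _
      · exact Finset.single_le_sum (f := fun u' : Fin d → ℤ => |w j i u'|)
          (fun _ _ => abs_nonneg _) (hwB j i u hw)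
    have h2 : (∑ u' ∈ B, |w j i u'|) ≤ ∑ i' : Cin, ∑ u' ∈ B, |w j i' u'| :=
      Finset.single_le_sum (f := fun i' : Cin => ∑ u' ∈ B, |w j i' u'|)
        (fun _ _ => Finset.sum_nonneg fun _ _ => abs_nonneg _) (Finset.mem_univ i)
    have h3 : (∑ i' : Cin, ∑ u' ∈ B, |w j i' u'|) ≤ W1 := by
      rw [hW1def]
      exact Finset.single_le_sum (f := fun j' : Cout => ∑ i' : Cin, ∑ u' ∈ B, |w j' i' u'|)
        (fun _ _ => Finset.sum_nonneg fun _ _ => Finset.sum_nonneg fun _ _ => abs_nonneg _)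
        (Finset.mem_univ j)
    linarith
  have hbdd3 : ∀ j i, BddAbove (Set.range fun u => |w j i u|) := fun j i =>
    ⟨W1, by rintro _ ⟨u, rfl⟩; exact habs_le_W1 j i u⟩
  have hsup3_le : ∀ j i, (⨆ u : Fin d → ℤ, |w j i u|) ≤ W1 := fun j i =>
    ciSup_le (habs_le_W1 j i)
  have hbdd2 : ∀ j, BddAbove (Set.range fun i => ⨆ u : Fin d → ℤ, |w j i u|) := fun j =>
    ⟨W1, by rintro _ ⟨i, rfl⟩; exact hsup3_le j i⟩
  have hbdd1 : BddAbove (Set.range fun j => ⨆ i : Cin, ⨆ u : Fin d → ℤ, |w j i u|) :=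
    ⟨W1, by rintro _ ⟨j, rfl⟩; exact ciSup_le (hsup3_le j)⟩
  have hwM : ∀ j i u, |w j i u| ≤ M := by
    intro j i u
    calc |w j i u| ≤ ⨆ u : Fin d → ℤ, |w j i u| := le_ciSup (hbdd3 j i) u
      _ ≤ ⨆ i : Cin, ⨆ u : Fin d → ℤ, |w j i u| := le_ciSup (hbdd2 j) i
      _ ≤ M := le_ciSup hbdd1 j
  have hM0 : 0 ≤ M := Real.iSup_nonneg fun j => Real.iSup_nonneg fun i =>
    Real.iSup_nonneg fun u => abs_nonneg _
  -- tsum conversions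
  have htw : ∀ j i, (∑' u : Fin d → ℤ, |w j i u|) = ∑ u ∈ B, |w j i u| := by
    intro j i
    refine tsum_eq_sum ?_
    intro u hu
    rw [abs_eq_zero]
    by_contra h
    exact hu (hwB j i u h)
  have hfs : ∀ (t : Fin d → ℤ) (j : Cout),
      (∑ᶠ v : Fin d → ℤ, ∑ i : Cin, x v i * w j i ((fun k => (S:ℤ) * t k) - v))
        = ∑ v ∈ X, ∑ i : Cin, x v i * w j i ((fun k => (S:ℤ) * t k) - v) := by
    intro t j
    refine finsum_eq_sum_of_support_subset _ ?_
    intro v hv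
    rw [Function.mem_support] at hv
    obtain ⟨i, -, hi⟩ := Finset.exists_ne_zero_of_sum_ne_zero hv
    exact hxX v i (left_ne_zero_of_mul hi)
  have htsum : (∑' t : Fin d → ℤ, ∑ j : Cout,
        (∑ᶠ v : Fin d → ℤ, ∑ i : Cin, x v i * w j i ((fun k => (S:ℤ) * t k) - v)) ^ 2)
      = ∑ t ∈ T, ∑ j : Cout,
        (∑ v ∈ X, ∑ i : Cin, x v i * w j i ((fun k => (S:ℤ) * t k) - v)) ^ 2 := by
    have h0 : ∀ t ∉ T, (∑ j : Cout,
        (∑ᶠ v : Fin d → ℤ, ∑ i : Cin, x v i * w j i ((fun k => (S:ℤ) * t k) - v)) ^ 2) = 0 := by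
      intro t ht
      apply Finset.sum_eq_zero
      intro j _
      rw [hfs t j, pow_eq_zero_iff (two_ne_zero)]
      apply Finset.sum_eq_zero
      intro v hv
      apply Finset.sum_eq_zero
      intro i _
      by_contra h
      apply ht
      rw [hTdef, Finset.mem_preimage]
      have hwne : w j i ((fun k => (S:ℤ) * t k) - v) ≠ 0 := right_ne_zero_of_mul h
      have hmem := hwB _ _ _ hwne
      have heq : (fun k => (S:ℤ) * t k) = v + ((fun k => (S:ℤ) * t k) - v) := by ring
      rw [heq]
      exact Finset.add_mem_add hv hmem
    rw [tsum_eq_sum h0]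
    exact Finset.sum_congr rfl fun t _ => Finset.sum_congr rfl fun j _ => by rw [hfs t j]
  have htsx : (∑' v : Fin d → ℤ, ∑ i : Cin, x v i ^ 2) = ∑ v ∈ X, ∑ i : Cin, x v i ^ 2 := by
    refine tsum_eq_sum ?_
    intro v hv
    apply Finset.sum_eq_zero
    intro i _
    by_contra h
    exact hv (hxX v i (by
      intro h0
      exact h (by rw [h0]; ring)))
  -- helper identities for Cauchy-Schwarz
  have hterm1 : ∀ (a r : ℝ),
      a * (if 0 ≤ r then (1:ℝ) else -1) * Real.sqrt |r| * Real.sqrt |r| = a * r := by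
    intro a r
    rcases le_or_gt 0 r with h | h
    · rw [if_pos h, mul_one, mul_assoc, Real.mul_self_sqrt (abs_nonneg r), abs_of_nonneg h]
    · rw [if_neg (not_le.2 h), mul_assoc, Real.mul_self_sqrt (abs_nonneg r), abs_of_neg h]
      ring
  have hterm2 : ∀ (a r : ℝ),
      (a * (if 0 ≤ r then (1:ℝ) else -1) * Real.sqrt |r|) ^ 2 = a ^ 2 * |r| := by
    intro a r
    rcases le_or_gt 0 r with h | h
    · rw [if_pos h, mul_one, mul_pow, Real.sq_sqrt (abs_nonneg r)]
    · rw [if_neg (not_le.2 h), mul_pow, mul_pow, Real.sq_sqrt (abs_nonneg r)]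
      ring
  -- Cauchy-Schwarz per (t, j)
  have key : ∀ (t : Fin d → ℤ) (j : Cout),
      (∑ v ∈ X, ∑ i : Cin, x v i * w j i ((fun k => (S:ℤ) * t k) - v)) ^ 2
        ≤ (∑ v ∈ X, ∑ i : Cin, x v i ^ 2 * |w j i ((fun k => (S:ℤ) * t k) - v)|)
          * (∑ v ∈ X, ∑ i : Cin, |w j i ((fun k => (S:ℤ) * t k) - v)|) := by
    intro t j
    set e : (Fin d → ℤ) × Cin → ℝ := fun p => w j p.2 ((fun k => (S:ℤ) * t k) - p.1) with he
    have hcs := Finset.sum_mul_sq_le_sq_mul_sq (X ×ˢ (Finset.univ : Finset Cin))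
      (fun p => x p.1 p.2 * (if 0 ≤ e p then (1:ℝ) else -1) * Real.sqrt |e p|)
      (fun p => Real.sqrt |e p|)
    rw [← Finset.sum_product' X Finset.univ
        (fun v i => x v i * w j i ((fun k => (S:ℤ) * t k) - v)),
      ← Finset.sum_product' X Finset.univ
        (fun v i => x v i ^ 2 * |w j i ((fun k => (S:ℤ) * t k) - v)|),
      ← Finset.sum_product' X Finset.univ
        (fun v i => |w j i ((fun k => (S:ℤ) * t k) - v)|)]
    calc (∑ p ∈ X ×ˢ Finset.univ, x p.1 p.2 * e p) ^ 2
        = (∑ p ∈ X ×ˢ Finset.univ,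
            (x p.1 p.2 * (if 0 ≤ e p then (1:ℝ) else -1) * Real.sqrt |e p|)
              * Real.sqrt |e p|) ^ 2 := by
          congr 1
          exact Finset.sum_congr rfl fun p _ => (hterm1 _ _).symm
      _ ≤ (∑ p ∈ X ×ˢ Finset.univ,
            (x p.1 p.2 * (if 0 ≤ e p then (1:ℝ) else -1) * Real.sqrt |e p|) ^ 2)
          * (∑ p ∈ X ×ˢ Finset.univ, (Real.sqrt |e p|) ^ 2) := hcs
      _ = (∑ p ∈ X ×ˢ Finset.univ, x p.1 p.2 ^ 2 * |e p|)
          * (∑ p ∈ X ×ˢ Finset.univ, |e p|) := by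
          congr 1
          · exact Finset.sum_congr rfl fun p _ => hterm2 _ _
          · exact Finset.sum_congr rfl fun p _ => Real.sq_sqrt (abs_nonneg _)
  -- the ℓ¹ bound per (t, j)
  have hWbound : ∀ (t : Fin d → ℤ) (j : Cout),
      (∑ v ∈ X, ∑ i : Cin, |w j i ((fun k => (S:ℤ) * t k) - v)|)
        ≤ ∑ i : Cin, ∑ u ∈ B, |w j i u| := by
    intro t j
    rw [Finset.sum_comm]
    apply Finset.sum_le_sum
    intro i _
    have hinje : ∀ a ∈ X, ∀ b ∈ X,
        (fun k => (S:ℤ) * t k) - a = (fun k => (S:ℤ) * t k) - b → a = b := by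
      intro a _ b _ h
      have := sub_right_injective h
      exact this
    rw [← Finset.sum_image (f := fun u => |w j i u|)
      (g := fun v => (fun k => (S:ℤ) * t k) - v) hinje]
    have hzero : ∀ u ∈ X.image (fun v => (fun k => (S:ℤ) * t k) - v),
        u ∉ (X.image (fun v => (fun k => (S:ℤ) * t k) - v)) ∩ B → |w j i u| = 0 := by
      intro u hu hnu
      rw [abs_eq_zero]
      by_contra h
      exact hnu (Finset.mem_inter.2 ⟨hu, hwB j i u h⟩)
    rw [← Finset.sum_subset (Finset.inter_subset_left) (fun u hu hnu => hzero u hu hnu)]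
    exact Finset.sum_le_sum_of_subset_of_nonneg (Finset.inter_subset_right)
      (fun _ _ _ => abs_nonneg _)
  -- the counting bound
  have hcount : ∀ (j : Cout) (i : Cin) (v : Fin d → ℤ),
      (∑ t ∈ T, |w j i ((fun k => (S:ℤ) * t k) - v)|)
        ≤ ((∏ k : Fin d, ((Size k + S - 1) / S) : ℕ) : ℝ) * M := by
    intro j i v
    set p : (Fin d → ℤ) → Prop :=
      fun t => ∀ k, v k ≤ (S:ℤ) * t k ∧ (S:ℤ) * t k < v k + Size k with hp
    have hfil : (∑ t ∈ T.filter p, |w j i ((fun k => (S:ℤ) * t k) - v)|)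
        = ∑ t ∈ T, |w j i ((fun k => (S:ℤ) * t k) - v)| := by
      apply Finset.sum_filter_of_ne
      intro t _ hne
      rw [ne_eq, abs_eq_zero] at hne
      have hmem := hwB _ _ _ hne
      rw [hB, Fintype.mem_piFinset] at hmem
      intro k
      have := hmem k
      rw [Finset.mem_Ico] at this
      have h1 := this.1
      have h2 := this.2
      simp only [Pi.sub_apply] at h1 h2
      constructor <;> linarith
    rw [← hfil]
    have hsubset : T.filter p ⊆ Fintype.piFinset
        fun k => Finset.Icc (-(-(v k) / (S:ℤ))) ((v k + (Size k : ℤ) - 1) / (S:ℤ)) := by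
      intro t ht
      rw [Finset.mem_filter] at ht
      rw [Fintype.mem_piFinset]
      intro k
      exact strided_mem_Icc hS0 (ht.2 k).1 (ht.2 k).2
    have hcard : (T.filter p).card ≤ ∏ k : Fin d, ((Size k + S - 1) / S) := by
      calc (T.filter p).card
          ≤ (Fintype.piFinset fun k =>
              Finset.Icc (-(-(v k) / (S:ℤ))) ((v k + (Size k : ℤ) - 1) / (S:ℤ))).card :=
            Finset.card_le_card hsubset
        _ = ∏ k : Fin d, (Finset.Icc (-(-(v k) / (S:ℤ)))
              ((v k + (Size k : ℤ) - 1) / (S:ℤ))).card := Fintype.card_piFinset _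
        _ ≤ ∏ k : Fin d, ((Size k + S - 1) / S) :=
            Finset.prod_le_prod' fun k _ => strided_card_Icc hS (hz k) (v k)
    calc (∑ t ∈ T.filter p, |w j i ((fun k => (S:ℤ) * t k) - v)|)
        ≤ (T.filter p).card • M :=
          Finset.sum_le_card_nsmul _ _ _ (fun t _ => hwM j i _)
      _ = ((T.filter p).card : ℝ) * M := nsmul_eq_mul _ _
      _ ≤ ((∏ k : Fin d, ((Size k + S - 1) / S) : ℕ) : ℝ) * M :=
          mul_le_mul_of_nonneg_right (by exact_mod_cast hcard) hM0
  -- assemble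
  rw [htsum, htsx]
  simp only [htw]
  rw [← Real.sqrt_mul (by positivity)]
  apply Real.sqrt_le_sqrt
  set D : ℝ := ((∏ k : Fin d, ((Size k + S - 1) / S) : ℕ) : ℝ) with hD
  have hD0 : 0 ≤ D := by rw [hD]; positivity
  set E : ℝ := ∑ v ∈ X, ∑ i : Cin, x v i ^ 2 with hE
  calc ∑ t ∈ T, ∑ j : Cout,
        (∑ v ∈ X, ∑ i : Cin, x v i * w j i ((fun k => (S:ℤ) * t k) - v)) ^ 2
      ≤ ∑ t ∈ T, ∑ j : Cout,
        (∑ v ∈ X, ∑ i : Cin, x v i ^ 2 * |w j i ((fun k => (S:ℤ) * t k) - v)|)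
          * (∑ i : Cin, ∑ u ∈ B, |w j i u|) := by
        apply Finset.sum_le_sum
        intro t _
        apply Finset.sum_le_sum
        intro j _
        exact le_trans (key t j) (mul_le_mul_of_nonneg_left (hWbound t j)
          (Finset.sum_nonneg fun _ _ => Finset.sum_nonneg fun _ _ =>
            mul_nonneg (sq_nonneg _) (abs_nonneg _)))
    _ = ∑ j : Cout, (∑ i : Cin, ∑ u ∈ B, |w j i u|)
          * ∑ v ∈ X, ∑ i : Cin, x v i ^ 2
            * ∑ t ∈ T, |w j i ((fun k => (S:ℤ) * t k) - v)| := by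
        rw [Finset.sum_comm]
        apply Finset.sum_congr rfl
        intro j _
        rw [← Finset.sum_mul, ← mul_comm]
        congr 1
        rw [Finset.sum_comm]
        apply Finset.sum_congr rfl
        intro v _
        rw [Finset.sum_comm]
        apply Finset.sum_congr rfl
        intro i _
        rw [Finset.mul_sum]
    _ ≤ ∑ j : Cout, (∑ i : Cin, ∑ u ∈ B, |w j i u|) * (E * (D * M)) := by
        apply Finset.sum_le_sum
        intro j _
        apply mul_le_mul_of_nonneg_left _
          (Finset.sum_nonneg fun _ _ => Finset.sum_nonneg fun _ _ => abs_nonneg _)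
        calc (∑ v ∈ X, ∑ i : Cin, x v i ^ 2
                * ∑ t ∈ T, |w j i ((fun k => (S:ℤ) * t k) - v)|)
            ≤ ∑ v ∈ X, ∑ i : Cin, x v i ^ 2 * (D * M) := by
              apply Finset.sum_le_sum
              intro v _
              apply Finset.sum_le_sum
              intro i _
              exact mul_le_mul_of_nonneg_left (hcount j i v) (sq_nonneg _)
          _ = E * (D * M) := by
              rw [hE, Finset.sum_mul]
              apply Finset.sum_congr rfl
              intro v _
              rw [Finset.sum_mul]
    _ = D * W1 * M * E := by
        rw [← Finset.sum_mul, ← hW1def]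
        ring
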